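/- The Hirota system is 3D consistent: given complex f, f₁, f₂, f₃ and parameters α₁, α₂, α₃, define f_{ij} by f_{ij}/f = (α_i f_i − α_j f_j)/(α_j f_i − α_i f_j). Then the three values of f_{123} computed from the three faces adjacent to f_{123} coincide and equal f_{123} = [α₃(α₁²−α₂²)f₁f₂ + α₁(α₂²−α₃²)f₂f₃ + α₂(α₃²−α₁²)f₃f₁] / [α₃(α₂²−α₁²)f₃ + α₁(α₃²−α₂²)f₁ + α₂(α₁²−α₃²)f₂]. -/

import Mathlib

/-- 3D consistency of the Hirota system: the value
`f₁₂₃ = [α₃(α₁²−α₂²)f₁f₂ + α₁(α₂²−α₃²)f₂f₃ + α₂(α₃²−α₁²)f₃f₁] /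
        [α₃(α₂²−α₁²)f₃ + α₁(α₃²−α₂²)f₁ + α₂(α₁²−α₃²)f₂]`
satisfies the Hirota equation on all three faces adjacent to it, i.e. the three values
of `f₁₂₃` computed from these faces coincide and are given by this formula. -/
theorem hirota_3D_consistency
    (f f1 f2 f3 f12 f23 f13 F : ℂ) (α1 α2 α3 : ℂ)
    (hα1 : α1 ≠ 0) (hα2 : α2 ≠ 0) (hα3 : α3 ≠ 0)
    (hf : f ≠ 0) (hf1 : f1 ≠ 0) (hf2 : f2 ≠ 0) (hf3 : f3 ≠ 0)
    -- the Hirota equations on the three faces adjacent to f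
    (h12 : f12 / f = (α1 * f1 - α2 * f2) / (α2 * f1 - α1 * f2))
    (h23 : f23 / f = (α2 * f2 - α3 * f3) / (α3 * f2 - α2 * f3))
    (h13 : f13 / f = (α1 * f1 - α3 * f3) / (α3 * f1 - α1 * f3))
    -- genericity: all denominators are nonzero
    (g12 : α2 * f1 - α1 * f2 ≠ 0) (g23 : α3 * f2 - α2 * f3 ≠ 0)
    (g13 : α3 * f1 - α1 * f3 ≠ 0)
    (k1 : α3 * f12 - α2 * f13 ≠ 0) (k2 : α3 * f12 - α1 * f23 ≠ 0)
    (k3 : α2 * f13 - α1 * f23 ≠ 0)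
    (gden : α3 * (α2 ^ 2 - α1 ^ 2) * f3 + α1 * (α3 ^ 2 - α2 ^ 2) * f1 +
            α2 * (α1 ^ 2 - α3 ^ 2) * f2 ≠ 0)
    (hF : F = (α3 * (α1 ^ 2 - α2 ^ 2) * f1 * f2 + α1 * (α2 ^ 2 - α3 ^ 2) * f2 * f3 +
               α2 * (α3 ^ 2 - α1 ^ 2) * f3 * f1) /
              (α3 * (α2 ^ 2 - α1 ^ 2) * f3 + α1 * (α3 ^ 2 - α2 ^ 2) * f1 +
               α2 * (α1 ^ 2 - α3 ^ 2) * f2)) :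
    F / f1 = (α2 * f12 - α3 * f13) / (α3 * f12 - α2 * f13) ∧
    F / f2 = (α1 * f12 - α3 * f23) / (α3 * f12 - α1 * f23) ∧
    F / f3 = (α1 * f13 - α2 * f23) / (α2 * f13 - α1 * f23) := by

  have e12 : f12 = (α1 * f1 - α2 * f2) * f / (α2 * f1 - α1 * f2) := by
    field_simp at h12 ⊢
    linear_combination h12
  have e13 : f13 = (α1 * f1 - α3 * f3) * f / (α3 * f1 - α1 * f3) := by
    field_simp at h13 ⊢
    linear_combination h13
  have e23 : f23 = (α2 * f2 - α3 * f3) * f / (α3 * f2 - α2 * f3) := by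
    field_simp at h23 ⊢
    linear_combination h23
  subst hF e12 e13 e23
  refine ⟨?_, ?_, ?_⟩ <;>
  · rw [div_eq_div_iff (by assumption) (by assumption), div_mul_eq_mul_div, div_eq_iff gden]
    field_simp
    ring
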